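/- Every induced matching of G(m,n) has at most m-1 edges (assuming m ≤ n). -/

import Mathlib

/-- The graph `G(m,n)`: vertices are pairs `(i,j)` (0-indexed, corresponding to
`x_{i+1,j+1}`), and `x_{i,j} ~ x_{k,l}` iff (`i < k` and `j > l`) or (`i > k` and `j < l`). -/
def gridGraph (m n : ℕ) : SimpleGraph (Fin m × Fin n) where
  Adj u v := (u.1 < v.1 ∧ v.2 < u.2) ∨ (v.1 < u.1 ∧ u.2 < v.2)
  symm := ⟨fun u v h => Or.symm h⟩
  loopless := ⟨fun u h => by rcases h with ⟨h, -⟩ | ⟨h, -⟩ <;> exact absurd h (lt_irrefl _)⟩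

/-- `M` is an induced matching of the induced subgraph of `G` on `A`:
a set of pairwise disjoint edges of `G` with all endpoints in `A`, such that the only
adjacencies among the endpoints are the edges of `M` themselves. -/
def IsInducedMatchingOn {V : Type*} (G : SimpleGraph V) (A : Set V) (M : Set (Sym2 V)) :
    Prop :=
  (∀ e ∈ M, ∀ v ∈ e, v ∈ A) ∧
  (∀ e ∈ M, ∃ u v, G.Adj u v ∧ e = s(u, v)) ∧
  (∀ e ∈ M, ∀ f ∈ M, e ≠ f → ∀ v ∈ e, v ∉ f) ∧
  (∀ u v : V, (∃ e ∈ M, u ∈ e) → (∃ e ∈ M, v ∈ e) → G.Adj u v → s(u, v) ∈ M)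

/-- for `m ≤ n`, every induced matching of `G(m,n)` has at most `m - 1`
edges. -/
theorem stmt6 (m n : ℕ) (hmn : m ≤ n)
    (M : Set (Sym2 (Fin m × Fin n)))
    (hM : IsInducedMatchingOn (gridGraph m n) Set.univ M) :
    M.ncard ≤ m - 1 := by
  obtain ⟨-, hedge, hdisj, hind⟩ := hM
  -- normalized decomposition of edges
  have hnorm : ∀ e ∈ M, ∃ u v : Fin m × Fin n, u.1 < v.1 ∧ v.2 < u.2 ∧ e = s(u, v) := by
    intro e he
    obtain ⟨u, v, hadj, rfl⟩ := hedge e he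
    rcases hadj with ⟨h1, h2⟩ | ⟨h1, h2⟩
    · exact ⟨u, v, h1, h2, rfl⟩
    · exact ⟨v, u, h1, h2, Sym2.eq_swap⟩
  -- key cross lemma: if u belongs to an edge of M, v' belongs to an edge of M,
  -- u.1 < v'.1 and u appears as the "top" of its own edge with partner v ≠ v',
  -- then u is not adjacent to v'.
  have key : ∀ u v v' : Fin m × Fin n, s(u, v) ∈ M → (∃ e ∈ M, v' ∈ e) →
      v' ≠ u → v' ≠ v → ¬ (gridGraph m n).Adj u v' := by
    intro u v v' he hv' hne1 hne2 hadj
    have hmem : s(u, v') ∈ M := hind u v' ⟨s(u, v), he, by simp⟩ hv' hadj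
    have hne : s(u, v) ≠ s(u, v') := by
      intro h
      have : v' ∈ s(u, v) := h ▸ (by simp : v' ∈ s(u, v'))
      rcases Sym2.mem_iff.mp this with h' | h'
      · exact hne1 h'
      · exact hne2 h'
    exact hdisj _ he _ hmem hne u (by simp) (by simp)
  classical
  set f : Sym2 (Fin m × Fin n) → ℕ :=
    Sym2.lift ⟨fun u v => max u.1.val v.1.val, fun u v => by simp [max_comm]⟩ with hf
  have hmap : ∀ e ∈ M, f e ∈ Set.Ico 1 m := by
    intro e he
    obtain ⟨u, v, h1, h2, rfl⟩ := hnorm e he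
    have : f s(u, v) = v.1.val := by
      simp only [hf, Sym2.lift_mk]
      exact max_eq_right (le_of_lt h1)
    rw [this]
    exact ⟨Nat.lt_of_le_of_lt (Nat.zero_le _) h1, v.1.isLt⟩
  have hinj : Set.InjOn f M := by
    intro e he e' he' hfe
    by_contra hne
    obtain ⟨u, v, h1, h2, rfl⟩ := hnorm e he
    obtain ⟨u', v', h1', h2', rfl⟩ := hnorm e' he'
    have hv : f s(u, v) = v.1.val := by
      simp only [hf, Sym2.lift_mk]; exact max_eq_right (le_of_lt h1)
    have hv' : f s(u', v') = v'.1.val := by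
      simp only [hf, Sym2.lift_mk]; exact max_eq_right (le_of_lt h1')
    have hrow : v.1 = v'.1 := Fin.ext (by rw [← hv, ← hv', hfe])
    -- v ≠ v'
    have hvv' : v ≠ v' := by
      intro h
      exact hdisj _ he _ he' hne v (by simp) (by rw [h]; simp)
    have hcol : v.2 ≠ v'.2 := fun h => hvv' (Prod.ext hrow h)
    -- u not adjacent to v'
    have hna1 : ¬ (gridGraph m n).Adj u v' := by
      refine key u v v' he ⟨s(u', v'), he', by simp⟩ ?_ hvv'.symm
      intro h
      rw [← h] at h1
      exact absurd (hrow ▸ h1) (lt_irrefl _)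
    have hna2 : ¬ (gridGraph m n).Adj u' v := by
      refine key u' v' v he' ⟨s(u, v), he, by simp⟩ ?_ hvv'
      intro h
      rw [← h] at h1'
      exact absurd (hrow.symm ▸ h1') (lt_irrefl _)
    have hle1 : u.2 ≤ v'.2 := le_of_not_gt fun h => hna1 (Or.inl ⟨hrow ▸ h1, h⟩)
    have hle2 : u'.2 ≤ v.2 := le_of_not_gt fun h => hna2 (Or.inl ⟨hrow.symm ▸ h1', h⟩)
    exact absurd (lt_trans (lt_of_lt_of_le h2 hle1) (lt_of_lt_of_le h2' hle2)) (lt_irrefl _)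
  have hfin : (Set.Ico 1 m).Finite := Set.finite_Ico 1 m
  have hcard : (Set.Ico 1 m).ncard = m - 1 := by
    rw [← Finset.coe_Ico, Set.ncard_coe_finset, Nat.card_Ico]
  calc M.ncard ≤ (Set.Ico 1 m).ncard := Set.ncard_le_ncard_of_injOn f hmap hinj hfin
    _ = m - 1 := hcard
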